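/- (Gauss–Lucas) If P is a non-constant polynomial with complex coefficients, then every root of the derivative P′ belongs to the convex hull (over ℝ, in ℂ viewed as a real vector space) of the set of roots of P. -/

import Mathlib

open Polynomial Complex

/-- Gauss–Lucas theorem: every root of the derivative of a non-constant complex
polynomial lies in the convex hull of the roots of the polynomial. -/
theorem gauss_lucas (P : Polynomial ℂ) (hP : 1 ≤ P.degree)
    (z : ℂ) (hz : Polynomial.eval z (Polynomial.derivative P) = 0) :
    z ∈ convexHull ℝ {w : ℂ | Polynomial.eval w P = 0} := by
  classical
  by_cases h0 : Polynomial.eval z P = 0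
  · exact subset_convexHull ℝ _ h0
  have hPne : P ≠ 0 := fun h => by simp [h] at h0
  set t := P.roots with ht
  have hfac : P = C P.leadingCoeff * (t.map fun r => X - C r).prod :=
    (C_leadingCoeff_mul_prod_multiset_X_sub_C (splits_iff_card_roots.1 (IsAlgClosed.splits P))).symm
  set Q : ℂ[X] := (t.map fun r => X - C r).prod with hQ
  have hzr : ∀ r ∈ t, z - r ≠ 0 := by
    intro r hr hzr0
    apply h0
    have : z = r := by linear_combination hzr0
    rw [this]
    exact Polynomial.isRoot_of_mem_roots hr
  have hQz : Polynomial.eval z Q ≠ 0 := by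
    rw [hQ, eval_multiset_prod]
    simp only [Multiset.map_map, Function.comp, eval_sub, eval_X, eval_C]
    apply Multiset.prod_ne_zero
    simp only [Multiset.mem_map]
    rintro ⟨r, hr, h⟩
    exact hzr r hr h
  have hlc : P.leadingCoeff ≠ 0 := leadingCoeff_ne_zero.2 hPne
  -- evaluate derivative of Q
  have hQ' : Polynomial.eval z (derivative Q) =
      (t.map fun i => (z - i)⁻¹).sum * Polynomial.eval z Q := by
    have he : ∀ (s : Multiset ℂ[X]), Polynomial.eval z s.sum = (s.map (Polynomial.eval z)).sum := by
      intro s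
      have := map_multiset_sum (evalRingHom z) s
      simpa using this
    rw [hQ, derivative_prod, he, Multiset.map_map]
    have : ∀ i ∈ t, (Polynomial.eval z ∘ fun i =>
        (Multiset.map (fun r => X - C r) (t.erase i)).prod * derivative (X - C i)) i
        = (z - i)⁻¹ * Polynomial.eval z Q := by
      intro i hi
      simp only [Function.comp_apply, derivative_sub, derivative_X, derivative_C, sub_zero,
        mul_one, eval_mul, eval_one, eval_multiset_prod, Multiset.map_map, Function.comp,
        eval_sub, eval_X, eval_C]
      have key : (z - i) * (Multiset.map (fun r => z - r) (t.erase i)).prod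
          = Polynomial.eval z Q := by
        rw [hQ, eval_multiset_prod, Multiset.map_map]
        simp only [Function.comp, eval_sub, eval_X, eval_C]
        exact Multiset.prod_map_erase (f := fun r => z - r) hi
      field_simp [hzr i hi]
      linear_combination key
    rw [Multiset.map_congr rfl this]
    rw [← Multiset.sum_map_mul_right]
  -- K = 0
  have hK : (t.map fun i => (z - i)⁻¹).sum = 0 := by
    have hd : Polynomial.eval z (derivative P) =
        P.leadingCoeff * ((t.map fun i => (z - i)⁻¹).sum * Polynomial.eval z Q) := by
      conv_lhs => rw [hfac]
      rw [derivative_mul, derivative_C, zero_mul, eval_add, eval_mul, eval_C, eval_zero,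
        zero_add, hQ']
    rw [hz] at hd
    rcases mul_eq_zero.1 hd.symm with h | h
    · exact absurd h hlc
    rcases mul_eq_zero.1 h with h | h
    · exact h
    · exact absurd h hQz
  -- conjugate
  have hK2 : (t.map fun i => (z - i) * ((normSq (z - i))⁻¹ : ℝ)).sum = 0 := by
    have := congrArg (starRingEnd ℂ) hK
    rw [map_multiset_sum, Multiset.map_map, map_zero] at this
    rw [← this]
    apply congrArg
    apply Multiset.map_congr rfl
    intro i _
    simp only [Function.comp_apply, Complex.inv_def, map_mul, Complex.conj_conj,
      Complex.conj_ofReal]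
  -- set up convex combination
  set l := t.toList with hl
  have hlt : (l : Multiset ℂ) = t := Multiset.coe_toList t
  have hmem : ∀ i : Fin l.length, l.get i ∈ t := by
    intro i
    rw [← hlt]
    exact Multiset.mem_coe.2 (l.get_mem i)
  set w : Fin l.length → ℝ := fun i => (normSq (z - l.get i))⁻¹ with hw
  have hwpos : ∀ i, 0 < w i := by
    intro i
    exact inv_pos.2 (normSq_pos.2 (hzr _ (hmem i)))
  have hnpos : 0 < l.length := by
    rcases Nat.eq_zero_or_pos l.length with h | h
    · exfalso
      have : t = 0 := by rw [← hlt, List.length_eq_zero_iff.1 h]; rfl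
      have hcard : Multiset.card t = P.natDegree :=
        (splits_iff_card_roots.1 (IsAlgClosed.splits P))
      have : P.natDegree = 0 := by rw [← hcard, this]; rfl
      have h2 : 0 < P.natDegree := natDegree_pos_iff_degree_pos.2 (lt_of_lt_of_le zero_lt_one hP)
      omega
    · exact h
  have hS : 0 < ∑ i, w i := Finset.sum_pos (fun i _ => hwpos i) (by
    simpa [Finset.univ_nonempty_iff] using Fin.pos_iff_nonempty.1 hnpos)
  -- sum identity in Fin form
  have hfin : ∑ i : Fin l.length, (z - l.get i) * ((normSq (z - l.get i))⁻¹ : ℝ) = 0 := by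
    rw [← hK2, ← hlt]
    rw [Multiset.map_coe, Multiset.sum_coe]
    exact (Fin.sum_univ_fun_getElem l fun i => (z - i) * ((normSq (z - i))⁻¹ : ℝ))
  have hcm : Finset.univ.centerMass w (fun i : Fin l.length => l.get i) = z := by
    rw [Finset.centerMass]
    have h1 : ∑ i : Fin l.length, w i • l.get i = (↑(∑ i, w i) : ℂ) * z := by
      have : ∀ i : Fin l.length, w i • l.get i
          = ((w i : ℂ)) * z - (z - l.get i) * ((normSq (z - l.get i))⁻¹ : ℝ) := by
        intro i
        rw [hw]
        push_cast [Complex.real_smul]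
        ring
      rw [Finset.sum_congr rfl fun i _ => this i, Finset.sum_sub_distrib, hfin, sub_zero,
        ← Finset.sum_mul]
      push_cast
      ring
    have hSne : ((∑ i, w i : ℝ) : ℂ) ≠ 0 := by exact_mod_cast hS.ne'
    rw [h1, Complex.real_smul]
    push_cast at hSne ⊢
    field_simp
  rw [← hcm]
  exact Finset.centerMass_mem_convexHull _ (fun i _ => (hwpos i).le) hS
    (fun i _ => by
      simp only [Set.mem_setOf_eq]
      have := hmem i
      rw [ht] at this
      exact Polynomial.isRoot_of_mem_roots this)
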